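/- arXiv:2011.09382 — 2 statements merged into one kernel-verified Lean document; each statement's English description precedes it below -/
import Mathlib

section
/- Let Γ be a piecewise-C¹ curve in ℂ of length |Γ|, let f and g be holomorphic on an open neighborhood of Γ, let C > 1 be real, and suppose that |f(z)| > C·|g(z)| and f(z) ≠ 0 for all z ∈ Γ (so in particular f(z) + g(z) ≠ 0 on Γ). Then |∫_Γ (f+g)'(z)/(f+g)(z) dz| ≤ |∫_Γ f'(z)/f(z) dz| + (C/(C−1)) · |Γ| · sup_{z∈Γ} ( |f'(z)|·|g(z)|/|f(z)|² + |g'(z)|/|f(z)| ). -/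
open MeasureTheory Set

/-- If `|f| > C·|g|` with `C > 1` and `f ≠ 0` on the piecewise-C¹ curve `Γ`
(parametrized by `γ : [a,b] → ℂ`, with derivative `γ'` away from a finite exceptional set),
and `f, g` are holomorphic on an open neighborhood of `Γ`, then
`|∫_Γ (f+g)'/(f+g)| ≤ |∫_Γ f'/f| + (C/(C-1))·|Γ|·sup_{z∈Γ} (|f'(z)||g(z)|/|f(z)|² + |g'(z)|/|f(z)|)`. -/
theorem arg_principle_integral_remainder
    (a b : ℝ) (hab : a ≤ b)
    (γ γ' : ℝ → ℂ)
    (hγc : ContinuousOn γ (Set.Icc a b))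
    (s : Set ℝ) (hs : s.Finite)
    (hγd : ∀ t ∈ Set.Icc a b \ s, HasDerivAt γ (γ' t) t)
    (hγ'i : IntervalIntegrable γ' MeasureTheory.volume a b)
    (U : Set ℂ) (hU : IsOpen U) (hΓU : γ '' Set.Icc a b ⊆ U)
    (f g : ℂ → ℂ)
    (hf : DifferentiableOn ℂ f U) (hg : DifferentiableOn ℂ g U)
    (C : ℝ) (hC : 1 < C)
    (hdom : ∀ z ∈ γ '' Set.Icc a b, C * ‖g z‖ < ‖f z‖)
    (hf0 : ∀ z ∈ γ '' Set.Icc a b, f z ≠ 0) :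
    ‖∫ t in a..b, (deriv f (γ t) + deriv g (γ t)) / (f (γ t) + g (γ t)) * γ' t‖ ≤
      ‖∫ t in a..b, deriv f (γ t) / f (γ t) * γ' t‖ +
        C / (C - 1) * (∫ t in a..b, ‖γ' t‖) *
          sSup ((fun z => ‖deriv f z‖ * ‖g z‖ / ‖f z‖ ^ 2 +
              ‖deriv g z‖ / ‖f z‖) '' (γ '' Set.Icc a b)) := by
  set Γ : Set ℂ := γ '' Set.Icc a b with hΓ
  have hΓcomp : IsCompact Γ := (isCompact_Icc).image_of_continuousOn hγc
  have hΓne : Γ.Nonempty := (nonempty_Icc.2 hab).image γ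
  set φ : ℂ → ℝ := fun z => ‖deriv f z‖ * ‖g z‖ / ‖f z‖ ^ 2 +
      ‖deriv g z‖ / ‖f z‖ with hφ
  set M : ℝ := sSup (φ '' Γ) with hM
  have hC1 : (0:ℝ) < C - 1 := by linarith
  have hC0 : (0:ℝ) < C := by linarith
  -- continuity of derivatives
  have hf' : ContinuousOn (deriv f) U := ((hf.analyticOnNhd hU).deriv_of_isOpen hU).continuousOn
  have hg' : ContinuousOn (deriv g) U := ((hg.analyticOnNhd hU).deriv_of_isOpen hU).continuousOn
  have hfc : ContinuousOn f U := hf.continuousOn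
  have hgc : ContinuousOn g U := hg.continuousOn
  -- nonvanishing of f + g on Γ
  have hlow : ∀ z ∈ Γ, ‖f z‖ * ((C - 1) / C) ≤ ‖f z + g z‖ := by
    intro z hz
    have h1 := hdom z hz
    have h2 : ‖g z‖ < ‖f z‖ / C := by
      rw [lt_div_iff₀ hC0]; linarith [h1]
    have h3 : ‖f z‖ - ‖g z‖ ≤ ‖f z + g z‖ := by
      have h4 := norm_add_le (f z + g z) (-g z)
      simp only [add_neg_cancel_right, norm_neg] at h4
      linarith
    have : ‖f z‖ * ((C - 1) / C) = ‖f z‖ - ‖f z‖ / C := by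
      field_simp
    rw [this]; linarith
  have hfpos : ∀ z ∈ Γ, 0 < ‖f z‖ := by
    intro z hz; exact norm_pos_iff.mpr (hf0 z hz)
  have hfg0 : ∀ z ∈ Γ, f z + g z ≠ 0 := by
    intro z hz
    have h := hlow z hz
    have hp : 0 < ‖f z‖ * ((C - 1) / C) :=
      mul_pos (hfpos z hz) (div_pos hC1 hC0)
    intro h0
    rw [h0] at h; simp at h; nlinarith
  -- φ is continuous on Γ, so M is a sup attained on a compact set
  have hΓU' : Γ ⊆ U := hΓU
  have hφc : ContinuousOn φ Γ := by
    apply ContinuousOn.add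
    · apply ContinuousOn.div
      · exact ((continuous_norm.comp_continuousOn (hf'.mono hΓU')).mul
          (continuous_norm.comp_continuousOn (hgc.mono hΓU')))
      · exact ((continuous_norm.comp_continuousOn (hfc.mono hΓU'))).pow 2
      · intro z hz; exact pow_ne_zero 2 (ne_of_gt (hfpos z hz))
    · apply ContinuousOn.div
      · exact continuous_norm.comp_continuousOn (hg'.mono hΓU')
      · exact continuous_norm.comp_continuousOn (hfc.mono hΓU')
      · intro z hz; exact ne_of_gt (hfpos z hz)
  have hbdd : BddAbove (φ '' Γ) := (hΓcomp.image_of_continuousOn hφc).bddAbove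
  have hub : ∀ z ∈ Γ, φ z ≤ M := fun z hz => le_csSup hbdd (mem_image_of_mem φ hz)
  have hM0 : 0 ≤ M := by
    obtain ⟨z, hz⟩ := hΓne
    refine le_trans ?_ (hub z hz)
    have := hfpos z hz
    positivity
  -- the remainder function
  set h : ℂ → ℂ := fun z => (f z * deriv g z - deriv f z * g z) / (f z * (f z + g z)) with hh
  -- pointwise decomposition
  have hdecomp : ∀ z ∈ Γ, (deriv f z + deriv g z) / (f z + g z) = deriv f z / f z + h z := by
    intro z hz
    have h1 := hf0 z hz
    have h2 := hfg0 z hz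
    rw [hh]; field_simp
    ring
  -- pointwise bound on h
  have hbound : ∀ z ∈ Γ, ‖h z‖ ≤ C / (C - 1) * φ z := by
    intro z hz
    have hfp := hfpos z hz
    have hlo := hlow z hz
    have hSpos : 0 < ‖f z + g z‖ := by
      have : 0 < ‖f z‖ * ((C - 1) / C) := mul_pos hfp (div_pos hC1 hC0)
      linarith
    have hnum : ‖f z * deriv g z - deriv f z * g z‖ ≤
        ‖f z‖ * ‖deriv g z‖ +
          ‖deriv f z‖ * ‖g z‖ := by
      calc ‖f z * deriv g z - deriv f z * g z‖
          ≤ ‖f z * deriv g z‖ + ‖deriv f z * g z‖ := norm_sub_le _ _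
        _ = ‖f z‖ * ‖deriv g z‖ +
            ‖deriv f z‖ * ‖g z‖ := by
            simp [map_mul]
    have hden : ‖f z * (f z + g z)‖ = ‖f z‖ * ‖f z + g z‖ := by
      simp [map_mul]
    rw [hh]
    simp only [norm_div]
    rw [hden]
    rw [div_le_iff₀ (mul_pos hfp hSpos)]
    have key : C / (C - 1) * φ z * (‖f z‖ * ‖f z + g z‖) ≥
        ‖f z‖ * ‖deriv g z‖ +
          ‖deriv f z‖ * ‖g z‖ := by
      have hφval : φ z * ‖f z‖ ^ 2 =
          ‖deriv f z‖ * ‖g z‖ +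
            ‖deriv g z‖ * ‖f z‖ := by
        rw [hφ]; field_simp
      have h1 : ‖f z‖ ≤ C / (C - 1) * ‖f z + g z‖ := by
        rw [← sub_nonneg] at hlo ⊢
        have : C / (C - 1) * ‖f z + g z‖ - ‖f z‖ =
            C / (C - 1) * (‖f z + g z‖ - ‖f z‖ * ((C - 1) / C)) := by
          field_simp
        rw [this]
        exact mul_nonneg (le_of_lt (div_pos hC0 hC1)) hlo
      have hφ0 : 0 ≤ φ z := by positivity
      calc ‖f z‖ * ‖deriv g z‖ +
            ‖deriv f z‖ * ‖g z‖
          = φ z * ‖f z‖ ^ 2 := by rw [hφval]; ring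
        _ = φ z * ‖f z‖ * ‖f z‖ := by ring
        _ ≤ φ z * ‖f z‖ * (C / (C - 1) * ‖f z + g z‖) := by
            exact mul_le_mul_of_nonneg_left h1 (mul_nonneg hφ0 hfp.le)
        _ = C / (C - 1) * φ z * (‖f z‖ * ‖f z + g z‖) := by ring
    linarith [le_trans hnum key]
  -- uIcc = Icc
  have huIcc : Set.uIcc a b = Set.Icc a b := Set.uIcc_of_le hab
  have hmem : ∀ t ∈ Set.Icc a b, γ t ∈ Γ := fun t ht => mem_image_of_mem γ ht
  -- integrabilities
  have hcomp : ∀ (u : ℂ → ℂ), ContinuousOn u U →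
      ContinuousOn (fun t => u (γ t)) (Set.Icc a b) := by
    intro u hu
    exact hu.comp hγc (fun t ht => hΓU' (hmem t ht))
  have hic1 : ContinuousOn (fun t => deriv f (γ t) / f (γ t)) (Set.Icc a b) := by
    exact (hcomp _ hf').div (hcomp _ hfc) (fun t ht => hf0 _ (hmem t ht))
  have hic2 : ContinuousOn (fun t => h (γ t)) (Set.Icc a b) := by
    apply ContinuousOn.div
    · exact ((hcomp _ hfc).mul (hcomp _ hg')).sub ((hcomp _ hf').mul (hcomp _ hgc))
    · exact (hcomp _ hfc).mul ((hcomp _ hfc).add (hcomp _ hgc))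
    · intro t ht
      exact mul_ne_zero (hf0 _ (hmem t ht)) (hfg0 _ (hmem t ht))
  have hi1 : IntervalIntegrable (fun t => deriv f (γ t) / f (γ t) * γ' t) volume a b :=
    hγ'i.continuousOn_mul (huIcc ▸ hic1)
  have hi2 : IntervalIntegrable (fun t => h (γ t) * γ' t) volume a b :=
    hγ'i.continuousOn_mul (huIcc ▸ hic2)
  -- split the integral
  have hsplit : (∫ t in a..b, (deriv f (γ t) + deriv g (γ t)) / (f (γ t) + g (γ t)) * γ' t) =
      (∫ t in a..b, deriv f (γ t) / f (γ t) * γ' t) + ∫ t in a..b, h (γ t) * γ' t := by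
    rw [← intervalIntegral.integral_add hi1 hi2]
    apply intervalIntegral.integral_congr
    intro t ht
    rw [huIcc] at ht
    dsimp only
    rw [hdecomp _ (hmem t ht)]
    ring
  rw [hsplit]
  have step1 : ‖(∫ t in a..b, deriv f (γ t) / f (γ t) * γ' t) + ∫ t in a..b, h (γ t) * γ' t‖ ≤
      ‖∫ t in a..b, deriv f (γ t) / f (γ t) * γ' t‖ + ‖∫ t in a..b, h (γ t) * γ' t‖ :=
    norm_add_le _ _
  have step2 : ‖∫ t in a..b, h (γ t) * γ' t‖ ≤
      C / (C - 1) * (∫ t in a..b, ‖γ' t‖) * M := by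
    calc ‖∫ t in a..b, h (γ t) * γ' t‖
        ≤ ∫ t in a..b, ‖h (γ t) * γ' t‖ :=
          intervalIntegral.norm_integral_le_integral_norm hab
      _ ≤ ∫ t in a..b, C / (C - 1) * M * ‖γ' t‖ := by
          apply intervalIntegral.integral_mono_on hab hi2.norm
            ((hγ'i.norm.const_mul (C / (C - 1) * M)))
          intro t ht
          rw [norm_mul]
          have h1 : ‖h (γ t)‖ ≤ C / (C - 1) * φ (γ t) := hbound _ (hmem t ht)
          have h2 : φ (γ t) ≤ M := hub _ (hmem t ht)
          have : ‖h (γ t)‖ ≤ C / (C - 1) * M := by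
            refine le_trans h1 ?_
            exact mul_le_mul_of_nonneg_left h2 (le_of_lt (div_pos hC0 hC1))
          exact mul_le_mul_of_nonneg_right this (norm_nonneg _)
      _ = C / (C - 1) * (∫ t in a..b, ‖γ' t‖) * M := by
          rw [intervalIntegral.integral_const_mul]; ring
  calc ‖(∫ t in a..b, deriv f (γ t) / f (γ t) * γ' t) + ∫ t in a..b, h (γ t) * γ' t‖
      ≤ ‖∫ t in a..b, deriv f (γ t) / f (γ t) * γ' t‖ + ‖∫ t in a..b, h (γ t) * γ' t‖ := step1
    _ ≤ ‖∫ t in a..b, deriv f (γ t) / f (γ t) * γ' t‖ +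
          C / (C - 1) * (∫ t in a..b, ‖γ' t‖) * M := by linarith
end

section
/- Let a, b, c be complex numbers with c not a non-positive integer (in particular c ≠ 0). Then for all complex z with |z| < 1: (d/dz) ₂F₁(a,b;c;z) = ( (c−a)(c−b) · ₂F₁(a,b;c+1;z) + c(a+b−c) · ₂F₁(a,b;c;z) ) / ( c(1−z) ). -/
open Polynomial Filter Topology

noncomputable def hypCoeff (a b c : ℂ) (n : ℕ) : ℂ :=
  eval a (ascPochhammer ℂ n) * eval b (ascPochhammer ℂ n) /
    (eval c (ascPochhammer ℂ n) * (n.factorial : ℂ))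

lemma asc_eval_ne {c : ℂ} (hc : ∀ n : ℕ, c ≠ -(n : ℂ)) (n : ℕ) :
    eval c (ascPochhammer ℂ n) ≠ 0 := by
  induction n with
  | zero => simp
  | succ n ih =>
    rw [ascPochhammer_succ_eval]
    exact mul_ne_zero ih (fun h => hc n (by linear_combination h))

lemma norm_add_nat (a : ℂ) (n : ℕ) : ‖a + n‖ ≤ ‖a‖ + n := by
  simpa using norm_add_le a (n : ℂ)

lemma norm_nat_add_one (n : ℕ) : ‖(n : ℂ) + 1‖ = (n : ℝ) + 1 := by
  rw [show ((n:ℂ)+1) = ((n+1:ℕ):ℂ) by push_cast; ring, Complex.norm_natCast]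
  push_cast; ring

noncomputable def hypV (a b c : ℂ) (n : ℕ) : ℝ :=
  (‖a‖ + n) * (‖b‖ + n) / (‖c + n‖ * ((n:ℝ) + 1))

lemma hypCoeff_succ (a b c : ℂ) (n : ℕ) :
    hypCoeff a b c (n + 1) =
      hypCoeff a b c n * ((a + n) * (b + n) / ((c + n) * ((n:ℂ) + 1))) := by
  rw [hypCoeff, hypCoeff, div_mul_div_comm]
  rw [ascPochhammer_succ_eval, ascPochhammer_succ_eval, ascPochhammer_succ_eval]
  push_cast [Nat.factorial_succ]
  ring_nf

lemma hypCoeff_succ_norm {a b c : ℂ} (hc : ∀ n : ℕ, c ≠ -(n : ℂ)) (n : ℕ) :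
    ‖hypCoeff a b c (n + 1)‖ ≤ ‖hypCoeff a b c n‖ * hypV a b c n := by
  rw [hypCoeff_succ, norm_mul, hypV]
  gcongr
  rw [norm_div, norm_mul, norm_mul, norm_nat_add_one]
  have h1 : (0:ℝ) < ‖c + (n:ℂ)‖ := by
    rw [norm_pos_iff]
    exact fun h => hc n (by linear_combination h)
  gcongr
  · exact norm_add_nat a n
  · exact norm_add_nat b n

lemma tendsto_aux1 (K : ℝ) : Tendsto (fun n : ℕ => (K + n) / ((n:ℝ) + 1)) atTop (𝓝 1) := by
  have h : ∀ n : ℕ, (K + n) / ((n : ℝ) + 1) = 1 + (K - 1) / ((n : ℝ) + 1) := by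
    intro n
    have h0 : (n : ℝ) + 1 ≠ 0 := by positivity
    field_simp
    ring
  simp_rw [h]
  have h2 : Tendsto (fun n : ℕ => (K - 1) / ((n : ℝ) + 1)) atTop (𝓝 0) :=
    Tendsto.div_atTop tendsto_const_nhds
      (tendsto_atTop_add_const_right _ 1 tendsto_natCast_atTop_atTop)
  simpa using (tendsto_const_nhds (x := (1:ℝ))).add h2

lemma tendsto_aux2 (K : ℝ) (c : ℂ) :
    Tendsto (fun n : ℕ => (K + n) / ‖c + n‖) atTop (𝓝 1) := by
  have hinv : Tendsto (fun n : ℕ => ((n:ℂ) + 1)⁻¹) atTop (𝓝 0) := by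
    have := (tendsto_inv_atTop_nhds_zero_nat (𝕜 := ℂ)).comp
      (tendsto_add_atTop_nat 1)
    refine this.congr fun n => ?_
    show (((n+1 : ℕ) : ℂ))⁻¹ = ((n:ℂ)+1)⁻¹
    push_cast
    ring_nf
  have hB : Tendsto (fun n : ℕ => (c + n) / ((n:ℂ) + 1)) atTop (𝓝 1) := by
    have h : ∀ n : ℕ, (c + n) / ((n:ℂ) + 1) = 1 + (c - 1) * ((n:ℂ) + 1)⁻¹ := by
      intro n
      have h0 : (n:ℂ) + 1 ≠ 0 := Nat.cast_add_one_ne_zero n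
      field_simp
      ring
    simp_rw [h]
    simpa using (tendsto_const_nhds (x := (1:ℂ))).add (tendsto_const_nhds.mul hinv)
  have hC : Tendsto (fun n : ℕ => ((n:ℂ) + 1) / (c + n)) atTop (𝓝 1) := by
    have := (hB.inv₀ one_ne_zero)
    simpa [inv_div] using this
  have hD : Tendsto (fun n : ℕ => ((n:ℝ) + 1) / ‖c + n‖) atTop (𝓝 1) := by
    have := hC.norm
    simp only [norm_one] at this
    refine this.congr fun n => ?_
    rw [norm_div, norm_nat_add_one]
  have := (tendsto_aux1 K).mul hD
  rw [one_mul] at this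
  refine this.congr fun n => ?_
  rw [div_mul_div_comm, mul_comm ((n:ℝ)+1) ‖c + (n:ℂ)‖, mul_div_mul_right]
  positivity

lemma tendsto_hypV (a b c : ℂ) : Tendsto (hypV a b c) atTop (𝓝 1) := by
  have := (tendsto_aux1 ‖a‖).mul (tendsto_aux2 ‖b‖ c)
  rw [one_mul] at this
  refine this.congr fun n => ?_
  rw [hypV, div_mul_div_comm, mul_comm ‖c + (n:ℂ)‖ ((n:ℝ)+1)]

lemma summable_hyp {a b c : ℂ} (hc : ∀ n : ℕ, c ≠ -(n : ℂ)) {z : ℂ} (hz : ‖z‖ < 1) :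
    Summable (fun n : ℕ => hypCoeff a b c n * z ^ n) := by
  set r : ℝ := (1 + ‖z‖) / 2 with hr
  have hr1 : r < 1 := by rw [hr]; linarith
  have hzr : ‖z‖ < r := by rw [hr]; linarith
  apply summable_of_ratio_norm_eventually_le hr1
  have hev : ∀ᶠ n in atTop, hypV a b c n * ‖z‖ < r := by
    have : Tendsto (fun n => hypV a b c n * ‖z‖) atTop (𝓝 (1 * ‖z‖)) :=
      (tendsto_hypV a b c).mul tendsto_const_nhds
    rw [one_mul] at this
    exact this.eventually_lt_const hzr
  filter_upwards [hev] with n hn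
  rw [norm_mul, norm_mul, norm_pow, norm_pow, pow_succ]
  calc ‖hypCoeff a b c (n+1)‖ * (‖z‖ ^ n * ‖z‖)
      ≤ (‖hypCoeff a b c n‖ * hypV a b c n) * (‖z‖ ^ n * ‖z‖) := by
        gcongr
        exact hypCoeff_succ_norm hc n
    _ = (hypV a b c n * ‖z‖) * (‖hypCoeff a b c n‖ * ‖z‖ ^ n) := by ring
    _ ≤ r * (‖hypCoeff a b c n‖ * ‖z‖ ^ n) :=
        mul_le_mul_of_nonneg_right hn.le (by positivity)

lemma summable_hyp_deriv_bound {a b c : ℂ} (hc : ∀ n : ℕ, c ≠ -(n : ℂ)) {r : ℝ}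
    (hr0 : 0 < r) (hr1 : r < 1) :
    Summable (fun n : ℕ => (n:ℝ) * ‖hypCoeff a b c n‖ * r ^ (n - 1)) := by
  set r' : ℝ := (1 + r) / 2 with hr'
  have hr'1 : r' < 1 := by rw [hr']; linarith
  have hrr' : r < r' := by rw [hr']; linarith
  apply summable_of_ratio_norm_eventually_le hr'1
  have htend : Tendsto (fun n : ℕ => ((1:ℝ) + n) / ‖(0:ℂ) + n‖ * hypV a b c n * r)
      atTop (𝓝 r) := by
    have := ((tendsto_aux2 1 0).mul (tendsto_hypV a b c)).mul
      (tendsto_const_nhds (x := r))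
    simpa using this
  have hev := htend.eventually_lt_const hrr'
  filter_upwards [hev, eventually_ge_atTop 1] with n hn hn1
  have hnR : (1:ℝ) ≤ (n:ℝ) := by exact_mod_cast hn1
  have hnpos : (0:ℝ) < n := by linarith
  have habs : ‖(0:ℂ) + (n:ℂ)‖ = (n:ℝ) := by simp
  rw [habs] at hn
  have hv0 : 0 ≤ hypV a b c n := by
    rw [hypV]
    have h1 : (0:ℝ) ≤ ‖a‖ + n := by positivity
    have h2 : (0:ℝ) ≤ ‖b‖ + n := by positivity
    have h3 : (0:ℝ) ≤ ‖c + n‖ * ((n:ℝ) + 1) := by positivity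
    exact div_nonneg (mul_nonneg h1 h2) h3
  have key : ((n:ℝ)+1) * ‖hypCoeff a b c (n+1)‖ * r ^ n ≤
      r' * ((n:ℝ) * ‖hypCoeff a b c n‖ * r ^ (n-1)) := by
    have hsplit : r ^ n = r ^ (n-1) * r := by
      rw [← pow_succ]
      congr 1
      omega
    calc ((n:ℝ)+1) * ‖hypCoeff a b c (n+1)‖ * r ^ n
        ≤ ((n:ℝ)+1) * (‖hypCoeff a b c n‖ * hypV a b c n) * r ^ n := by
          gcongr
          exact hypCoeff_succ_norm hc n
      _ = ((1 + (n:ℝ)) / n * hypV a b c n * r) * ((n:ℝ) * ‖hypCoeff a b c n‖ * r ^ (n-1)) := by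
          rw [hsplit]
          field_simp
          ring
      _ ≤ r' * ((n:ℝ) * ‖hypCoeff a b c n‖ * r ^ (n-1)) :=
          mul_le_mul_of_nonneg_right hn.le (by positivity)
  have hpos1 : (0:ℝ) ≤ ((n:ℝ)+1) * ‖hypCoeff a b c (n+1)‖ * r ^ (n+1-1) := by positivity
  have hpos2 : (0:ℝ) ≤ (n:ℝ) * ‖hypCoeff a b c n‖ * r ^ (n-1) := by positivity
  rw [Real.norm_of_nonneg (by push_cast at hpos1 ⊢; exact hpos1), Real.norm_of_nonneg hpos2]
  push_cast
  simpa [Nat.add_sub_cancel] using key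

lemma hc_succ {c : ℂ} (hc : ∀ n : ℕ, c ≠ -(n : ℂ)) : ∀ n : ℕ, c + 1 ≠ -(n : ℂ) := by
  intro n h
  exact hc (n+1) (by push_cast; linear_combination h)

lemma asc_eval_add_one (c : ℂ) (n : ℕ) :
    c * eval (c+1) (ascPochhammer ℂ n) = eval c (ascPochhammer ℂ n) * (c + n) := by
  have h1 : eval c (ascPochhammer ℂ (n+1)) = c * eval (c+1) (ascPochhammer ℂ n) := by
    rw [ascPochhammer_succ_left, eval_mul, eval_X, eval_comp]
    simp
  rw [← h1, ascPochhammer_succ_eval]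

lemma hyp_key {a b c : ℂ} (hc : ∀ n : ℕ, c ≠ -(n : ℂ)) (n : ℕ) :
    c * (((n:ℂ)+1) * hypCoeff a b c (n+1)) - c * ((n:ℂ) * hypCoeff a b c n) =
      (c-a)*(c-b) * hypCoeff a b (c+1) n + c*(a+b-c) * hypCoeff a b c n := by
  have hPc := asc_eval_ne hc n
  have hPc1 := asc_eval_ne (hc_succ hc) n
  have hF : ((n.factorial : ℂ)) ≠ 0 := Nat.cast_ne_zero.mpr n.factorial_ne_zero
  have hcn : c + (n:ℂ) ≠ 0 := fun h => hc n (by linear_combination h)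
  have hc0 : c ≠ 0 := by have := hc 0; simpa using this
  have hn1 : (n:ℂ) + 1 ≠ 0 := Nat.cast_add_one_ne_zero n
  have rel := asc_eval_add_one c n
  have hB : hypCoeff a b (c+1) n =
      eval a (ascPochhammer ℂ n) * eval b (ascPochhammer ℂ n) * c /
        (eval c (ascPochhammer ℂ n) * (c + n) * (n.factorial : ℂ)) := by
    rw [hypCoeff]
    rw [div_eq_div_iff (mul_ne_zero hPc1 hF) (mul_ne_zero (mul_ne_zero hPc hcn) hF)]
    linear_combination (-(eval a (ascPochhammer ℂ n) * eval b (ascPochhammer ℂ n))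
      * (n.factorial : ℂ)) * rel
  rw [hypCoeff_succ, hB, hypCoeff]
  field_simp
  ring

/-- The Gaussian hypergeometric function
`₂F₁(a,b;c;z) = Σ_{n≥0} ((a)_n (b)_n / ((c)_n n!)) zⁿ`. -/
noncomputable def hyp2F1 (a b c z : ℂ) : ℂ :=
  ∑' n : ℕ,
    Polynomial.eval a (ascPochhammer ℂ n) * Polynomial.eval b (ascPochhammer ℂ n) /
      (Polynomial.eval c (ascPochhammer ℂ n) * (n.factorial : ℂ)) * z ^ n

lemma hyp2F1_eq (a b c z : ℂ) : hyp2F1 a b c z = ∑' n : ℕ, hypCoeff a b c n * z ^ n := rfl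

/-- Gauss's contiguous relation. If `c` is not a non-positive integer, then
for `|z| < 1`:
`d/dz ₂F₁(a,b;c;z) = ((c−a)(c−b)·₂F₁(a,b;c+1;z) + c(a+b−c)·₂F₁(a,b;c;z)) / (c(1−z))`. -/
theorem hyp2F1_deriv_eq (a b c : ℂ)
    (hc : ∀ n : ℕ, c ≠ -(n : ℂ))
    (z : ℂ) (hz : ‖z‖ < 1) :
    deriv (hyp2F1 a b c) z =
      ((c - a) * (c - b) * hyp2F1 a b (c + 1) z + c * (a + b - c) * hyp2F1 a b c z) /
        (c * (1 - z)) := by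
  have hzn : ‖z‖ < 1 := hz
  set A : ℕ → ℂ := hypCoeff a b c with hA
  set r : ℝ := (1 + ‖z‖) / 2 with hr
  have hr1 : r < 1 := by rw [hr]; linarith
  have hr0 : (0:ℝ) < r := by rw [hr]; positivity
  have hzr : ‖z‖ < r := by rw [hr]; linarith
  set u : ℕ → ℝ := fun n => (n:ℝ) * ‖A n‖ * r ^ (n - 1) with hu_def
  have hu : Summable u := summable_hyp_deriv_bound hc hr0 hr1
  set s : Set ℂ := Metric.ball (0:ℂ) r with hs
  have hzs : z ∈ s := by
    rw [hs, Metric.mem_ball, dist_zero_right]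
    exact hzr
  have hderiv : ∀ (n : ℕ) (y : ℂ), y ∈ s →
      HasDerivAt (fun w => A n * w ^ n) (A n * ((n:ℂ) * y ^ (n-1))) y :=
    fun n y _ => (hasDerivAt_pow n y).const_mul (A n)
  have hbound : ∀ (n : ℕ) (y : ℂ), y ∈ s → ‖A n * ((n:ℂ) * y ^ (n-1))‖ ≤ u n := by
    intro n y hy
    rw [Metric.mem_ball, dist_zero_right] at hy
    rw [norm_mul, norm_mul, norm_pow, Complex.norm_natCast]
    calc ‖A n‖ * ((n:ℝ) * ‖y‖ ^ (n-1)) ≤ ‖A n‖ * ((n:ℝ) * r ^ (n-1)) := by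
          gcongr
      _ = u n := by rw [hu_def]; ring
  have hf0 : Summable (fun n : ℕ => A n * z ^ n) := summable_hyp hc hzn
  have HD : HasDerivAt (fun y => ∑' n : ℕ, A n * y ^ n)
      (∑' n : ℕ, A n * ((n:ℂ) * z ^ (n-1))) z :=
    hasDerivAt_tsum_of_isPreconnected hu Metric.isOpen_ball
      (convex_ball _ _).isPreconnected hderiv hbound hzs hf0 hzs
  have hfun : hyp2F1 a b c = fun y => ∑' n : ℕ, A n * y ^ n := by
    funext y
    rw [hyp2F1_eq]
  have hderiv_eq : deriv (hyp2F1 a b c) z = ∑' n : ℕ, A n * ((n:ℂ) * z ^ (n-1)) := by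
    rw [hfun]
    exact HD.deriv
  rw [hderiv_eq]
  -- now the algebra
  set D : ℂ := ∑' n : ℕ, A n * ((n:ℂ) * z ^ (n-1)) with hD
  have Sd : Summable (fun n : ℕ => A n * ((n:ℂ) * z ^ (n-1))) :=
    Summable.of_norm_bounded hu (fun n => hbound n z hzs)
  set g : ℕ → ℂ := fun n => ((n:ℂ)+1) * A (n+1) * z ^ n with hg_def
  have Sg : Summable g := by
    have := (summable_nat_add_iff 1).mpr Sd
    refine this.congr fun n => ?_
    simp only [hg_def, Nat.add_sub_cancel]
    all_goals push_cast
    all_goals ring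
  have hDg : D = ∑' n : ℕ, g n := by
    rw [hD, Sd.tsum_eq_zero_add]
    simp only [Nat.cast_zero, zero_mul, mul_zero, zero_add]
    refine tsum_congr fun n => ?_
    simp only [hg_def, Nat.add_sub_cancel]
    push_cast
    ring
  set h : ℕ → ℂ := fun n => (n:ℂ) * A n * z ^ n with hh_def
  have Sh : Summable h := by
    refine (Sd.mul_left z).congr fun n => ?_
    simp only [hh_def]
    rcases Nat.eq_zero_or_pos n with h0 | h1
    · subst h0; simp
    · have : z ^ n = z * z ^ (n-1) := by
        rw [← pow_succ']
        congr 1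
        omega
      rw [this]
      ring
  have hzD : z * D = ∑' n : ℕ, h n := by
    rw [hD, ← tsum_mul_left]
    refine tsum_congr fun n => ?_
    simp only [hh_def]
    rcases Nat.eq_zero_or_pos n with h0 | h1
    · subst h0; simp
    · have : z ^ n = z * z ^ (n-1) := by
        rw [← pow_succ']
        congr 1
        omega
      rw [this]
      ring
  have SB : Summable (fun n : ℕ => hypCoeff a b (c+1) n * z ^ n) :=
    summable_hyp (hc_succ hc) hzn
  have hnum : (c - a) * (c - b) * hyp2F1 a b (c + 1) z + c * (a + b - c) * hyp2F1 a b c z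
      = c * (1 - z) * D := by
    rw [hyp2F1_eq, hyp2F1_eq, ← tsum_mul_left, ← tsum_mul_left,
      ← Summable.tsum_add (SB.mul_left ((c-a)*(c-b))) (hf0.mul_left (c*(a+b-c)))]
    have step : ∀ n : ℕ, (c-a)*(c-b) * (hypCoeff a b (c+1) n * z ^ n) +
        c*(a+b-c) * (A n * z ^ n) = c * g n - c * h n := by
      intro n
      simp only [hg_def, hh_def, hA]
      have := hyp_key (a := a) (b := b) hc n
      linear_combination (z ^ n) * this.symm
    rw [tsum_congr step, Summable.tsum_sub (Sg.mul_left c) (Sh.mul_left c), tsum_mul_left,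
      tsum_mul_left, ← hDg, ← hzD]
    ring
  have hc0 : c ≠ 0 := by have := hc 0; simpa using this
  have hz1 : (1:ℂ) - z ≠ 0 := by
    intro hcontra
    have : z = 1 := by linear_combination -hcontra
    rw [this] at hzn
    simp at hzn
  rw [hnum, mul_comm (c * (1-z)) D, mul_div_assoc, div_self (mul_ne_zero hc0 hz1), mul_one]
end
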